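/- Let f: E → ℝ be continuously differentiable and φ: E → ℝ be convex and continuously differentiable. If Lφ − f is convex for some L > 0, then for all x, y ∈ E, f(x) ≤ f(y) + ⟨∇f(y), x − y⟩ + L·D_φ(x,y), where D_φ is the Bregman distance of φ. -/

import Mathlib

open Filter Topology

/-- Bregman distance associated with `φ`. -/
noncomputable def Dphi {E : Type*} [NormedAddCommGroup E] [InnerProductSpace ℝ E]
    [CompleteSpace E] (φ : E → ℝ) (x y : E) : ℝ :=
  φ x - φ y - (inner ℝ (gradient φ y) (x - y) : ℝ)

/-- Tangent line lies below a differentiable convex function. -/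
lemma grad_ineq_aux {E : Type*} [NormedAddCommGroup E] [InnerProductSpace ℝ E]
    [CompleteSpace E] {g : E → ℝ} {p : E} (hconv : ConvexOn ℝ Set.univ g) (x y : E)
    (hgrad : HasGradientAt g p y) :
    (inner ℝ p (x - y) : ℝ) ≤ g x - g y := by
  set h : ℝ → ℝ := fun t => g (y + t • (x - y)) with hh
  have hcurve : ∀ t : ℝ, HasDerivAt (fun s : ℝ => y + s • (x - y)) (x - y) t := by
    intro t
    simpa using ((hasDerivAt_id t).smul_const (x - y)).const_add y
  have hF : HasFDerivAt g ((InnerProductSpace.toDual ℝ E) p) y := by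
    have := (hasGradientAt_iff_hasFDerivAt.mp hgrad)
    convert this using 1
  have hd : HasDerivAt h ((inner ℝ p (x - y) : ℝ)) 0 := by
    have hF0 : HasFDerivAt g ((InnerProductSpace.toDual ℝ E) p) (y + (0:ℝ) • (x - y)) := by
      simpa using hF
    have := hF0.comp_hasDerivAt 0 (hcurve 0)
    simp only [InnerProductSpace.toDual_apply_apply] at this
    exact this
  have hhconv : ConvexOn ℝ Set.univ h := by
    have : h = g ∘ (AffineMap.lineMap y x : ℝ →ᵃ[ℝ] E) := by
      funext t
      simp only [hh, Function.comp, AffineMap.lineMap_apply]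
      rw [add_comm]
      simp [vsub_eq_sub, vadd_eq_add]
    rw [this]
    have := hconv.comp_affineMap (AffineMap.lineMap y x : ℝ →ᵃ[ℝ] E)
    simpa using this
  have := hhconv.le_slope_of_hasDerivAt (Set.mem_univ (0 : ℝ)) (Set.mem_univ (1 : ℝ))
    zero_lt_one hd
  have hs : slope h 0 1 = g x - g y := by
    simp [slope_def_field, hh]
  linarith [this.trans_eq hs]

theorem stmt1 {E : Type*} [NormedAddCommGroup E] [InnerProductSpace ℝ E]
    [FiniteDimensional ℝ E]
    (f φ : E → ℝ) (L : ℝ) (hL : 0 < L)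
    (hf : ContDiff ℝ 1 f) (hφ : ContDiff ℝ 1 φ) (hφconv : ConvexOn ℝ Set.univ φ)
    (hconv : ConvexOn ℝ Set.univ (fun x => L * φ x - f x)) :
    ∀ x y : E, f x ≤ f y + (inner ℝ (gradient f y) (x - y) : ℝ) + L * Dphi φ x y := by
  intro x y
  have hfd : Differentiable ℝ f := hf.differentiable one_ne_zero
  have hφd : Differentiable ℝ φ := hφ.differentiable one_ne_zero
  have hgf : HasGradientAt f (gradient f y) y := (hfd y).hasGradientAt
  have hgφ : HasGradientAt φ (gradient φ y) y := (hφd y).hasGradientAt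
  have hg : HasGradientAt (fun x => L * φ x - f x)
      (L • gradient φ y - gradient f y) y := by
    rw [hasGradientAt_iff_hasFDerivAt]
    have hFφ : HasFDerivAt φ ((InnerProductSpace.toDual ℝ E) (gradient φ y)) y :=
      hasGradientAt_iff_hasFDerivAt.mp hgφ
    have hFf : HasFDerivAt f ((InnerProductSpace.toDual ℝ E) (gradient f y)) y :=
      hasGradientAt_iff_hasFDerivAt.mp hgf
    have := (hFφ.const_smul L).sub hFf
    refine HasFDerivAt.congr_fderiv this ?_
    ext v
    simp [smul_eq_mul]
  have key := grad_ineq_aux hconv x y hg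
  have hinner : (inner ℝ (L • gradient φ y - gradient f y) (x - y) : ℝ)
      = L * (inner ℝ (gradient φ y) (x - y) : ℝ) - (inner ℝ (gradient f y) (x - y) : ℝ) := by
    rw [inner_sub_left, real_inner_smul_left]
  rw [hinner] at key
  simp only [Dphi]
  linarith
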